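/- Let 1 ≤ p ≤ q_n ↑ q ≤ ∞ and let Λ, Γ be Waterman sequences. If sup_n max_{1≤k≤δ_n} Γ(k)^{1/q_n} Λ(k)^{−1/p} < ∞, then every function f ∈ ΛBV^{(p)} belongs to ΓBV^{(q_n↑q)}, with V_Γ(f; q_n↑q; δ) ≤ V_Λ^{(p)}(f) · sup_n max_{1≤k≤δ_n} Γ(k)^{1/q_n} Λ(k)^{−1/p}. -/

import Mathlib

open Finset Filter

lemma aux_rpow_sub (r : ℝ) (hr : 1 ≤ r) {x y c : ℝ} (hy : 0 ≤ y) (hyx : y ≤ x) (hc : 0 ≤ c) :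
    (y + c) ^ r - y ^ r ≤ (x + c) ^ r - x ^ r := by
  rcases hc.eq_or_lt with rfl | hc0
  · simp
  rcases hyx.eq_or_lt with rfl | hyx0
  · exact le_refl _
  have hx : (0 : ℝ) ≤ x := hy.trans hyx
  have hcv := convexOn_rpow hr
  have h1 := hcv.secant_mono (a := y) (x := y + c) (y := x + c)
    (Set.mem_Ici.2 hy) (Set.mem_Ici.2 (by linarith)) (Set.mem_Ici.2 (by linarith))
    (by intro h; nlinarith) (by intro h; nlinarith) (by linarith)
  have h2 := hcv.secant_mono (a := x + c) (x := y) (y := x)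
    (Set.mem_Ici.2 (by linarith)) (Set.mem_Ici.2 hy) (Set.mem_Ici.2 hx)
    (by intro h; nlinarith) (by intro h; nlinarith) hyx
  have h2' : ((x + c) ^ r - y ^ r) / ((x + c) - y) ≤ ((x + c) ^ r - x ^ r) / ((x + c) - x) := by
    have e1 : y ^ r - (x + c) ^ r = -((x + c) ^ r - y ^ r) := by ring
    have e2 : y - (x + c) = -((x + c) - y) := by ring
    have e3 : x ^ r - (x + c) ^ r = -((x + c) ^ r - x ^ r) := by ring
    have e4 : x - (x + c) = -((x + c) - x) := by ring
    rw [e1, e2, e3, e4, neg_div_neg_eq, neg_div_neg_eq] at h2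
    exact h2
  have h3 : ((y + c) ^ r - y ^ r) / ((y + c) - y) ≤ ((x + c) ^ r - x ^ r) / ((x + c) - x) :=
    h1.trans h2'
  rw [show (y + c) - y = c by ring, show (x + c) - x = c by ring] at h3
  exact (div_le_div_iff_of_pos_right hc0).1 h3

lemma aux_abel (c H : ℕ → ℝ) (s : ℕ) (hc : Antitone c) (hc0 : ∀ k, 0 ≤ c k)
    (hH0 : H 0 = 0) (hH : ∀ k, k ≤ s → 0 ≤ H k) :
    0 ≤ ∑ k ∈ range s, c k * (H (k + 1) - H k) := by
  have key : ∀ m, m ≤ s → c m * H m ≤ ∑ k ∈ range m, c k * (H (k + 1) - H k) := by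
    intro m
    induction m with
    | zero => intro _; simp [hH0]
    | succ m ih =>
      intro hm
      have ihm := ih (Nat.le_of_succ_le hm)
      rw [Finset.sum_range_succ]
      have h1 : c (m + 1) * H (m + 1) ≤ c m * H (m + 1) :=
        mul_le_mul_of_nonneg_right (hc (Nat.le_succ m)) (hH (m + 1) hm)
      nlinarith [ihm, h1]
  have h := key s le_rfl
  have h2 : 0 ≤ c s * H s := mul_nonneg (hc0 s) (hH s le_rfl)
  linarith

theorem embedding_sufficiency (lam gam : ℕ → ℝ)
    (hlam : ∀ j, 0 < lam j) (hgam : ∀ j, 0 < gam j)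
    (hlammono : Monotone lam) (hgammono : Monotone gam)
    (hlamdiv : Tendsto (fun n => ∑ j ∈ range n, 1 / lam j) atTop atTop)
    (hgamdiv : Tendsto (fun n => ∑ j ∈ range n, 1 / gam j) atTop atTop)
    (p : ℝ) (hp : 1 ≤ p)
    (qs : ℕ → ℝ) (hqs1 : ∀ n, 1 ≤ qs n) (hpqs : ∀ n, p ≤ qs n) (hqsmono : Monotone qs)
    (δ : ℕ → ℝ) (hδ2 : ∀ n, 2 ≤ δ n) (hδmono : Monotone δ) (hδdiv : Tendsto δ atTop atTop)
    (M : ℝ)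
    (hM : ∀ (n k : ℕ), 1 ≤ k → (k : ℝ) ≤ δ n →
      (∑ j ∈ range k, 1 / gam j) ^ (1 / qs n) *
        (∑ j ∈ range k, 1 / lam j) ^ (-(1 / p)) ≤ M)
    (f : ℝ → ℝ) (V : ℝ)
    (hVf : ∀ (s : ℕ) (u v : Fin s → ℝ),
      (∀ j, 0 ≤ u j ∧ u j < v j ∧ v j ≤ 1) →
      (∀ i j, i ≠ j → Set.Ioo (u i) (v i) ∩ Set.Ioo (u j) (v j) = ∅) →
      (∑ j, |f (v j) - f (u j)| ^ p / lam (j : ℕ)) ^ (1 / p) ≤ V) :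
    ∀ (n : ℕ) (s : ℕ) (u v : Fin s → ℝ),
      (∀ j, 0 ≤ u j ∧ u j < v j ∧ v j ≤ 1) →
      (∀ i j, i ≠ j → Set.Ioo (u i) (v i) ∩ Set.Ioo (u j) (v j) = ∅) →
      (∀ j, 1 / δ n ≤ v j - u j) →
      (∑ j, |f (v j) - f (u j)| ^ (qs n) / gam (j : ℕ)) ^ (1 / qs n) ≤ V * M := by
  intro n s u v hiv hnov hlen
  have hp0 : (0 : ℝ) < p := lt_of_lt_of_le one_pos hp
  set q : ℝ := qs n with hqdef
  have hq1 : 1 ≤ q := hqs1 n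
  have hq0 : (0 : ℝ) < q := lt_of_lt_of_le one_pos hq1
  have hpq : p ≤ q := hpqs n
  set r : ℝ := q / p with hrdef
  have hr1 : 1 ≤ r := (one_le_div hp0).2 hpq
  have hr0 : (0 : ℝ) < r := lt_of_lt_of_le one_pos hr1
  have hpr : p * r = q := by rw [hrdef]; field_simp
  -- M is positive
  have hM0 : (0 : ℝ) < M := by
    have h1 : ((1 : ℕ) : ℝ) ≤ δ 0 := by
      have := hδ2 0; push_cast; linarith
    refine lt_of_lt_of_le ?_ (hM 0 1 le_rfl h1)
    rw [Finset.sum_range_one, Finset.sum_range_one]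
    have := hgam 0; have := hlam 0
    positivity
  -- V is nonnegative
  have hV0 : (0 : ℝ) ≤ V := by
    have h := hVf 0 Fin.elim0 Fin.elim0 (fun j => j.elim0) (fun i _ _ => i.elim0)
    simpa [one_div, Real.zero_rpow (inv_pos.2 hp0).ne'] using h
  -- s ≤ δ n
  have hδ0 : (0 : ℝ) < δ n := lt_of_lt_of_le two_pos (hδ2 n)
  have hsδ : (s : ℝ) ≤ δ n := by
    have hdisj : Pairwise (Function.onFun Disjoint fun j : Fin s => Set.Ioo (u j) (v j)) :=
      fun i j hij => Set.disjoint_iff_inter_eq_empty.2 (hnov i j hij)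
    have hmeas := MeasureTheory.measure_iUnion (μ := MeasureTheory.volume) hdisj
      (fun j => measurableSet_Ioo)
    have hsub : (⋃ j, Set.Ioo (u j) (v j)) ⊆ Set.Icc (0 : ℝ) 1 :=
      Set.iUnion_subset fun j =>
        Set.Ioo_subset_Icc_self.trans (Set.Icc_subset_Icc (hiv j).1 (hiv j).2.2)
    have hle : ∑' j : Fin s, MeasureTheory.volume (Set.Ioo (u j) (v j)) ≤ 1 := by
      rw [← hmeas]
      calc MeasureTheory.volume (⋃ j, Set.Ioo (u j) (v j))
          ≤ MeasureTheory.volume (Set.Icc (0 : ℝ) 1) := MeasureTheory.measure_mono hsub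
        _ = 1 := by rw [Real.volume_Icc]; norm_num
    rw [tsum_fintype] at hle
    have hle2 : ∑ j : Fin s, ENNReal.ofReal (v j - u j) ≤ 1 := by
      refine le_trans (le_of_eq ?_) hle
      exact Finset.sum_congr rfl fun j _ => (Real.volume_Ioo).symm
    rw [← ENNReal.ofReal_sum_of_nonneg
      (fun j _ => le_of_lt (sub_pos.2 (hiv j).2.1))] at hle2
    have hsum1 : ∑ j : Fin s, (v j - u j) ≤ 1 := ENNReal.ofReal_le_one.1 hle2
    have hsum2 : (s : ℝ) * (1 / δ n) ≤ ∑ j : Fin s, (v j - u j) := by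
      calc (s : ℝ) * (1 / δ n) = ∑ _j : Fin s, 1 / δ n := by
            simp [Finset.sum_const, mul_comm]
        _ ≤ ∑ j : Fin s, (v j - u j) := Finset.sum_le_sum fun j _ => hlen j
    have : (s : ℝ) * (1 / δ n) ≤ 1 := hsum2.trans hsum1
    rw [mul_one_div, div_le_one hδ0] at this
    exact this
  -- the sorted rearrangement
  set a : Fin s → ℝ := fun j => |f (v j) - f (u j)| with hadef
  set σ : Equiv.Perm (Fin s) := Fin.revPerm.trans (Tuple.sort a) with hσdef
  have ha0 : ∀ j, 0 ≤ a j := fun j => abs_nonneg _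
  have hbanti : Antitone fun k : Fin s => a (σ k) := by
    intro k l hkl
    exact Tuple.monotone_sort a (Fin.rev_le_rev.2 hkl)
  set b : ℕ → ℝ := fun k => if h : k < s then a (σ ⟨k, h⟩) else 0 with hbdef
  have hb0 : ∀ k, 0 ≤ b k := by
    intro k; rw [hbdef]; dsimp only; split
    · exact ha0 _
    · exact le_rfl
  have hbanti' : Antitone b := by
    intro k l hkl
    rw [hbdef]; dsimp only
    rcases lt_or_ge l s with hl | hl
    · rw [dif_pos hl, dif_pos (lt_of_le_of_lt hkl hl)]
      exact hbanti (show (⟨k, _⟩ : Fin s) ≤ ⟨l, hl⟩ from hkl)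
    · rw [dif_neg (not_lt.2 hl)]
      split
      · exact ha0 _
      · exact le_rfl
  have hbfin : ∀ j : Fin s, b (j : ℕ) = a (σ j) := by
    intro j; rw [hbdef]; dsimp only; rw [dif_pos j.isLt]
  -- abbreviations
  set L : ℕ → ℝ := fun m => ∑ j ∈ range m, 1 / lam j with hLdef
  set G : ℕ → ℝ := fun m => ∑ j ∈ range m, 1 / gam j with hGdef
  set A : ℕ → ℝ := fun m => ∑ k ∈ range m, b k ^ p / lam k with hAdef
  set cq : ℕ → ℝ := fun k => b k ^ q with hcqdef
  have hL0 : ∀ m, 0 ≤ L m := fun m =>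
    Finset.sum_nonneg fun j _ => le_of_lt (by have := hlam j; positivity)
  have hLpos : ∀ m, 1 ≤ m → 0 < L m := by
    intro m hm
    refine Finset.sum_pos (fun j _ => by have := hlam j; positivity) ?_
    exact Finset.nonempty_range_iff.2 (by omega)
  have hGpos : ∀ m, 1 ≤ m → 0 < G m := by
    intro m hm
    refine Finset.sum_pos (fun j _ => by have := hgam j; positivity) ?_
    exact Finset.nonempty_range_iff.2 (by omega)
  have hA0 : ∀ m, 0 ≤ A m := fun m =>
    Finset.sum_nonneg fun k _ =>
      div_nonneg (Real.rpow_nonneg (hb0 k) p) (hlam k).le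
  have hcq0 : ∀ k, 0 ≤ cq k := fun k => Real.rpow_nonneg (hb0 k) q
  have hcqanti : Antitone cq := fun k l hkl =>
    Real.rpow_le_rpow (hb0 l) (hbanti' hkl) hq0.le
  -- Γ(k) ≤ M^q Λ(k)^r for 1 ≤ k ≤ s
  have hGL : ∀ k, 1 ≤ k → k ≤ s → G k ≤ M ^ q * L k ^ r := by
    intro k hk1 hks
    have hkδ : (k : ℝ) ≤ δ n := le_trans (Nat.cast_le.2 hks) hsδ
    have h := hM n k hk1 hkδ
    have hLk : 0 < L k := hLpos k hk1
    have hGk : 0 < G k := hGpos k hk1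
    have h1 : G k ^ (1 / q) ≤ M * L k ^ (1 / p) := by
      have hLp : (0 : ℝ) < L k ^ (1 / p) := Real.rpow_pos_of_pos hLk _
      have h2 : G k ^ (1 / q) * (L k ^ (-(1 / p)) * L k ^ (1 / p)) ≤ M * L k ^ (1 / p) := by
        rw [← mul_assoc]
        exact mul_le_mul_of_nonneg_right h hLp.le
      rwa [← Real.rpow_add hLk, neg_add_cancel, Real.rpow_zero, mul_one] at h2
    have h2 := Real.rpow_le_rpow (Real.rpow_nonneg hGk.le _) h1 hq0.le
    rw [← Real.rpow_mul hGk.le, one_div, inv_mul_cancel₀ (ne_of_gt hq0), Real.rpow_one,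
      Real.mul_rpow hM0.le (Real.rpow_nonneg hLk.le _), ← Real.rpow_mul hLk.le] at h2
    rw [show 1 / p * q = r by rw [hrdef]; ring] at h2
    exact h2
  -- the convexity induction
  have claim2 : ∀ m, m ≤ s → ∑ k ∈ range m, cq k * (L (k + 1) ^ r - L k ^ r) ≤ A m ^ r := by
    intro m
    induction m with
    | zero =>
      intro _
      have : A 0 = 0 := by rw [hAdef]; simp
      rw [this, Real.zero_rpow (ne_of_gt hr0)]
      simp
    | succ m ih =>
      intro hm
      have ihm := ih (Nat.le_of_succ_le hm)
      rw [Finset.sum_range_succ]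
      have ht0 : (0 : ℝ) ≤ b m ^ p := Real.rpow_nonneg (hb0 m) p
      have hyx : b m ^ p * L m ≤ A m := by
        rw [hAdef, hLdef]; dsimp only
        rw [Finset.mul_sum]
        refine Finset.sum_le_sum fun k hk => ?_
        rw [mul_one_div]
        exact div_le_div_of_nonneg_right (Real.rpow_le_rpow (hb0 m)
          (hbanti' (Nat.le_of_lt (Finset.mem_range.1 hk))) hp0.le) (hlam k).le
      have hcc : (0 : ℝ) ≤ b m ^ p / lam m := div_nonneg ht0 (hlam m).le
      have hkey := aux_rpow_sub r hr1 (mul_nonneg ht0 (hL0 m)) hyx hcc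
      have e1 : b m ^ p * L m + b m ^ p / lam m = b m ^ p * L (m + 1) := by
        rw [hLdef]; dsimp only; rw [Finset.sum_range_succ]; ring
      have etr : (b m ^ p) ^ r = cq m := by
        rw [hcqdef]; dsimp only
        rw [← Real.rpow_mul (hb0 m), hpr]
      have e2 : (b m ^ p * L (m + 1)) ^ r = cq m * L (m + 1) ^ r := by
        rw [Real.mul_rpow ht0 (hL0 _), etr]
      have e3 : (b m ^ p * L m) ^ r = cq m * L m ^ r := by
        rw [Real.mul_rpow ht0 (hL0 _), etr]
      have e4 : A (m + 1) = A m + b m ^ p / lam m := by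
        rw [hAdef]; dsimp only; rw [Finset.sum_range_succ]
      rw [e1, e2, e3] at hkey
      rw [e4]
      linarith
  -- A s ≤ V ^ p
  have hAs : A s ≤ V ^ p := by
    have h := hVf s (fun j => u (σ j)) (fun j => v (σ j)) (fun j => hiv (σ j))
      (fun i j hij => hnov (σ i) (σ j) fun hc => hij (σ.injective hc))
    have hsum : (∑ j : Fin s, |f (v (σ j)) - f (u (σ j))| ^ p / lam (j : ℕ)) = A s := by
      rw [hAdef]; dsimp only
      rw [← Fin.sum_univ_eq_sum_range (fun k => b k ^ p / lam k) s]
      refine Finset.sum_congr rfl fun j _ => ?_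
      rw [hbfin j]
    rw [hsum] at h
    have h2 := Real.rpow_le_rpow (Real.rpow_nonneg (hA0 s) _) h hp0.le
    rwa [← Real.rpow_mul (hA0 s), one_div, inv_mul_cancel₀ (ne_of_gt hp0),
      Real.rpow_one] at h2
  -- Abel comparison
  have habel : ∑ k ∈ range s, cq k * (G (k + 1) - G k) ≤
      M ^ q * ∑ k ∈ range s, cq k * (L (k + 1) ^ r - L k ^ r) := by
    have hH0 : M ^ q * L 0 ^ r - G 0 = 0 := by
      rw [hLdef, hGdef]; dsimp only
      simp [Real.zero_rpow (ne_of_gt hr0)]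
    have hHpos : ∀ k, k ≤ s → 0 ≤ M ^ q * L k ^ r - G k := by
      intro k hks
      rcases Nat.eq_zero_or_pos k with rfl | hk1
      · exact le_of_eq hH0.symm
      · exact sub_nonneg.2 (hGL k hk1 hks)
    have h0 := aux_abel cq (fun k => M ^ q * L k ^ r - G k) s hcqanti hcq0 hH0 hHpos
    have hexp : ∑ k ∈ range s, cq k *
        ((M ^ q * L (k + 1) ^ r - G (k + 1)) - (M ^ q * L k ^ r - G k)) =
        M ^ q * (∑ k ∈ range s, cq k * (L (k + 1) ^ r - L k ^ r)) -
          ∑ k ∈ range s, cq k * (G (k + 1) - G k) := by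
      rw [Finset.mul_sum, ← Finset.sum_sub_distrib]
      exact Finset.sum_congr rfl fun k _ => by ring
    rw [hexp] at h0
    linarith
  -- the sum with original ordering
  have hG1 : ∀ k : ℕ, G (k + 1) - G k = 1 / gam k := by
    intro k; rw [hGdef]; dsimp only; rw [Finset.sum_range_succ]; ring
  have hrearr : (∑ j : Fin s, a j ^ q / gam (j : ℕ)) ≤
      ∑ k ∈ range s, cq k * (G (k + 1) - G k) := by
    have hmono : Monovary (fun k : Fin s => a (σ k) ^ q)
        (fun k : Fin s => 1 / gam (k : ℕ)) := by
      intro i j hij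
      dsimp only at hij ⊢
      have hji : j ≤ i := by
        by_contra hcon
        have hij' : i ≤ j := le_of_not_ge hcon
        have : 1 / gam (j : ℕ) ≤ 1 / gam (i : ℕ) :=
          one_div_le_one_div_of_le (hgam i) (hgammono (by exact_mod_cast hij'))
        linarith
      exact Real.rpow_le_rpow (ha0 _) (hbanti hji) hq0.le
    have h1 := hmono.sum_smul_comp_perm_le_sum_smul (σ := σ)
    simp only [smul_eq_mul] at h1
    calc (∑ j : Fin s, a j ^ q / gam (j : ℕ))
        = ∑ j : Fin s, a j ^ q * (1 / gam (j : ℕ)) := by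
          refine Finset.sum_congr rfl fun j _ => ?_; rw [mul_one_div]
      _ = ∑ k : Fin s, a (σ k) ^ q * (1 / gam ((σ k : Fin s) : ℕ)) :=
          (Equiv.sum_comp σ fun j => a j ^ q * (1 / gam (j : ℕ))).symm
      _ ≤ ∑ k : Fin s, a (σ k) ^ q * (1 / gam (k : ℕ)) := h1
      _ = ∑ k ∈ range s, cq k * (G (k + 1) - G k) := by
          rw [← Fin.sum_univ_eq_sum_range (fun k => cq k * (G (k + 1) - G k)) s]
          refine Finset.sum_congr rfl fun k _ => ?_
          rw [hG1, hcqdef]; dsimp only; rw [hbfin k]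
  -- put it together
  have htot : (∑ j : Fin s, a j ^ q / gam (j : ℕ)) ≤ (V * M) ^ q := by
    have h1 : ∑ k ∈ range s, cq k * (L (k + 1) ^ r - L k ^ r) ≤ A s ^ r := claim2 s le_rfl
    have h2 : A s ^ r ≤ (V ^ p) ^ r :=
      Real.rpow_le_rpow (hA0 s) hAs hr0.le
    have h3 : (V ^ p) ^ r = V ^ q := by
      rw [← Real.rpow_mul hV0, hpr]
    have h4 : M ^ q * ∑ k ∈ range s, cq k * (L (k + 1) ^ r - L k ^ r) ≤ M ^ q * V ^ q := by
      refine mul_le_mul_of_nonneg_left ?_ (Real.rpow_nonneg hM0.le q)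
      rw [← h3]; exact h1.trans h2
    have h5 : (V * M) ^ q = M ^ q * V ^ q := by
      rw [Real.mul_rpow hV0 hM0.le]; ring
    rw [h5]
    exact hrearr.trans (habel.trans h4)
  have hsumnn : (0 : ℝ) ≤ ∑ j : Fin s, a j ^ q / gam (j : ℕ) :=
    Finset.sum_nonneg fun j _ =>
      div_nonneg (Real.rpow_nonneg (ha0 j) q) (hgam _).le
  calc (∑ j : Fin s, |f (v j) - f (u j)| ^ q / gam (j : ℕ)) ^ (1 / q)
      ≤ ((V * M) ^ q) ^ (1 / q) := Real.rpow_le_rpow hsumnn htot (by positivity)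
    _ = V * M := by
        rw [← Real.rpow_mul (mul_nonneg hV0 hM0.le), mul_one_div,
          div_self (ne_of_gt hq0), Real.rpow_one]
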